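/- Fix a real number n and a positive integer k. Define polynomials q_m(y) for m = −1, 0, 1, …, k by q_{−1} = 0, q_0 = 1, and the recursion q_{m+1} = [y − 2m(k−m−n/2) − n(k−1)/2]·q_m − m(m−k)(m−1+n/2)(m−1+n/2−k)·q_{m−1}. Then q_k(y) = ∏_{j=1}^k (y − j(j−1)). -/

import Mathlib

open Finset

noncomputable section GJMSAux

def gjmsG (n : ℝ) (k : ℕ) (j : ℕ) : ℝ :=
  ((j : ℝ) + 1) * (n + 2 * (j : ℝ)) * ((k : ℝ) - 1 - (j : ℝ))

def gjmsC (n : ℝ) (k : ℕ) (m i : ℕ) : ℝ :=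
  if i ≤ m then
    (-(1:ℝ)/2)^(m-i) * (∏ j ∈ Finset.Ico i m, gjmsG n k j) / (Nat.factorial (m-i))
  else 0

lemma gjmsC_self (n : ℝ) (k m : ℕ) : gjmsC n k m m = 1 := by
  simp [gjmsC]

lemma gjmsC_of_gt (n : ℝ) (k : ℕ) {m i : ℕ} (h : m < i) : gjmsC n k m i = 0 := by
  simp [gjmsC, Nat.not_le.mpr h]

lemma gjmsCid (n : ℝ) (k : ℕ) (m i : ℕ) (h : i ≤ m + 1) :
    gjmsC n k (m+1) i
      = (if 1 ≤ i then gjmsC n k m (i-1) else 0)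
        + ((i:ℝ)*((i:ℝ)+1) - (2*(m:ℝ)*((k:ℝ)-(m:ℝ)-n/2) + n*((k:ℝ)-1)/2)) * gjmsC n k m i
        - (m:ℝ)*((m:ℝ)-(k:ℝ))*((m:ℝ)-1+n/2)*((m:ℝ)-1+n/2-(k:ℝ)) * gjmsC n k (m-1) i := by
  rcases Nat.lt_or_ge i (m+1) with hi | hi
  · -- i ≤ m
    rcases Nat.lt_or_ge i m with him | him
    · -- i < m : m = i + e + 1
      obtain ⟨e, rfl⟩ : ∃ e, m = i + e + 1 := ⟨m - i - 1, by omega⟩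
      have hprod : ∀ b : ℕ, i ≤ b →
          (∏ j ∈ Finset.Ico i (b+1), gjmsG n k j)
            = (∏ j ∈ Finset.Ico i b, gjmsG n k j) * gjmsG n k b := by
        intro b hb
        rw [Finset.prod_Ico_succ_top hb]
      have h1 : gjmsC n k (i+e+1+1) i
          = (-(1:ℝ)/2)^(e+2) * ((∏ j ∈ Finset.Ico i (i+e), gjmsG n k j)
              * gjmsG n k (i+e) * gjmsG n k (i+e+1)) / (Nat.factorial (e+2)) := by
        rw [gjmsC, if_pos (by omega)]
        rw [show i+e+1+1-i = e+2 by omega]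
        rw [show i+e+1+1 = (i+e+1)+1 by omega, hprod _ (by omega),
            show i+e+1 = (i+e)+1 by omega, hprod _ (by omega)]
      have h2 : gjmsC n k (i+e+1) i
          = (-(1:ℝ)/2)^(e+1) * ((∏ j ∈ Finset.Ico i (i+e), gjmsG n k j)
              * gjmsG n k (i+e)) / (Nat.factorial (e+1)) := by
        rw [gjmsC, if_pos (by omega)]
        rw [show i+e+1-i = e+1 by omega]
        rw [show i+e+1 = (i+e)+1 by omega, hprod _ (by omega)]
      have h3 : gjmsC n k (i+e+1-1) i
          = (-(1:ℝ)/2)^e * (∏ j ∈ Finset.Ico i (i+e), gjmsG n k j)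
              / (Nat.factorial e) := by
        rw [show i+e+1-1 = i+e by omega, gjmsC, if_pos (by omega)]
        rw [show i+e-i = e by omega]
      have h4 : (if 1 ≤ i then gjmsC n k (i+e+1) (i-1) else 0)
          = (-(1:ℝ)/2)^(e+2) * (((i:ℝ)*(n+2*(i:ℝ)-2)*((k:ℝ)-(i:ℝ)))
              * ((∏ j ∈ Finset.Ico i (i+e), gjmsG n k j) * gjmsG n k (i+e)))
              / (Nat.factorial (e+2)) := by
        rcases Nat.eq_zero_or_pos i with rfl | hipos
        · simp
        · obtain ⟨i', rfl⟩ : ∃ i', i = i' + 1 := ⟨i - 1, by omega⟩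
          rw [if_pos (by omega)]
          rw [show i'+1-1 = i' by omega, gjmsC, if_pos (by omega)]
          rw [show i'+1+e+1-i' = e+2 by omega]
          rw [Finset.prod_eq_prod_Ico_succ_bot (by omega : i' < i'+1+e+1)]
          rw [show i'+1+e+1 = (i'+1+e)+1 by omega, hprod _ (by omega)]
          rw [show i'+1+e = i'+1+e by rfl]
          push_cast [gjmsG]
          ring
      rw [h1, h2, h3, h4]
      have hf : (Nat.factorial (e+2) : ℝ) = ((e:ℝ)+2)*((e:ℝ)+1)*(Nat.factorial e) := by
        push_cast [Nat.factorial_succ]; ring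
      have hf1 : (Nat.factorial (e+1) : ℝ) = ((e:ℝ)+1)*(Nat.factorial e) := by
        push_cast [Nat.factorial_succ]; ring
      have hfe : (Nat.factorial e : ℝ) ≠ 0 := by positivity
      rw [hf, hf1, pow_succ, pow_succ]
      field_simp
      push_cast [gjmsG]
      ring
    · -- i = m
      obtain rfl : i = m := by omega
      rcases Nat.eq_zero_or_pos i with rfl | hm
      · simp only [Nat.zero_sub, Nat.le_refl]
        rw [gjmsC, if_pos (by omega), gjmsC_self]
        simp only [Nat.lt_irrefl, if_neg (by omega : ¬ 1 ≤ 0)]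
        rw [show 0+1-0 = 1 by rfl, show Finset.Ico 0 1 = {0} by rfl,
            Finset.prod_singleton]
        push_cast [gjmsG, Nat.factorial]
        ring
      · obtain ⟨m', rfl⟩ : ∃ m', i = m' + 1 := ⟨i - 1, by omega⟩
        rw [gjmsC_self, gjmsC_of_gt n k (by omega : m'+1-1 < m'+1)]
        rw [if_pos (by omega)]
        rw [gjmsC, if_pos (by omega), show m'+1+1-(m'+1) = 1 by omega]
        rw [gjmsC, if_pos (by omega), show m'+1-(m'+1-1) = 1 by omega,
            show m'+1-1 = m' by omega]
        rw [Finset.prod_Ico_succ_top (by omega : m'+1 ≤ m'+1),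
            Finset.prod_Ico_succ_top (by omega : m' ≤ m')]
        simp only [Finset.Ico_self, Finset.prod_empty]
        push_cast [gjmsG, Nat.factorial]
        ring
  · -- i = m + 1
    obtain rfl : i = m + 1 := by omega
    rw [gjmsC_self, gjmsC_of_gt n k (by omega : m < m+1),
        gjmsC_of_gt n k (by omega : m-1 < m+1), if_pos (by omega),
        show m+1-1 = m by omega, gjmsC_self]
    ring


def gjmsP (i : ℕ) (y : ℝ) : ℝ := ∏ j ∈ Finset.Icc 1 i, (y - (j : ℝ) * ((j : ℝ) - 1))

lemma gjmsP_succ (i : ℕ) (y : ℝ) :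
    gjmsP (i+1) y = gjmsP i y * (y - ((i:ℝ)+1)*(i:ℝ)) := by
  rw [gjmsP, gjmsP, Finset.prod_Icc_succ_top (by omega : 1 ≤ i+1)]
  push_cast; ring

def gjmsQ (n : ℝ) (k m : ℕ) (y : ℝ) : ℝ :=
  ∑ i ∈ Finset.range (m+1), gjmsC n k m i * gjmsP i y

lemma gjmsQ_eq_sum (n : ℝ) (k m b : ℕ) (hb : m + 1 ≤ b) (y : ℝ) :
    ∑ i ∈ Finset.range b, gjmsC n k m i * gjmsP i y = gjmsQ n k m y := by
  rw [gjmsQ]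
  refine (Finset.sum_subset (Finset.range_subset_range.mpr hb) ?_).symm
  intro x hx hx'
  rw [gjmsC_of_gt n k (by simp at hx hx' ⊢; omega), zero_mul]

lemma gjmsQ_rec (n : ℝ) (k m : ℕ) (y : ℝ) :
    gjmsQ n k (m+1) y
      = (y - 2*(m:ℝ)*((k:ℝ)-(m:ℝ)-n/2) - n*((k:ℝ)-1)/2) * gjmsQ n k m y
        - (m:ℝ)*((m:ℝ)-(k:ℝ))*((m:ℝ)-1+n/2)*((m:ℝ)-1+n/2-(k:ℝ)) * gjmsQ n k (m-1) y := by
  have step1 : gjmsQ n k (m+1) y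
      = ∑ i ∈ Finset.range (m+2),
          ((if 1 ≤ i then gjmsC n k m (i-1) else 0) * gjmsP i y
            + ((i:ℝ)*((i:ℝ)+1) - (2*(m:ℝ)*((k:ℝ)-(m:ℝ)-n/2) + n*((k:ℝ)-1)/2))
                * gjmsC n k m i * gjmsP i y
            - (m:ℝ)*((m:ℝ)-(k:ℝ))*((m:ℝ)-1+n/2)*((m:ℝ)-1+n/2-(k:ℝ))
                * gjmsC n k (m-1) i * gjmsP i y) := by
    rw [gjmsQ]
    refine Finset.sum_congr rfl ?_
    intro i hi
    rw [gjmsCid n k m i (by simp at hi; omega)]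
    ring
  rw [step1]
  rw [Finset.sum_sub_distrib, Finset.sum_add_distrib]
  have e1 : ∑ i ∈ Finset.range (m+2),
      (if 1 ≤ i then gjmsC n k m (i-1) else 0) * gjmsP i y
      = ∑ i ∈ Finset.range (m+1), gjmsC n k m i * gjmsP (i+1) y := by
    rw [Finset.sum_range_succ' _ (m+1)]
    simp
  have e2 : ∑ i ∈ Finset.range (m+2),
      ((i:ℝ)*((i:ℝ)+1) - (2*(m:ℝ)*((k:ℝ)-(m:ℝ)-n/2) + n*((k:ℝ)-1)/2))
        * gjmsC n k m i * gjmsP i y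
      = ∑ i ∈ Finset.range (m+1),
          ((i:ℝ)*((i:ℝ)+1) - (2*(m:ℝ)*((k:ℝ)-(m:ℝ)-n/2) + n*((k:ℝ)-1)/2))
            * gjmsC n k m i * gjmsP i y := by
    rw [Finset.sum_range_succ]
    rw [gjmsC_of_gt n k (by omega : m < m+1)]
    ring
  have e3 : ∑ i ∈ Finset.range (m+2),
      (m:ℝ)*((m:ℝ)-(k:ℝ))*((m:ℝ)-1+n/2)*((m:ℝ)-1+n/2-(k:ℝ))
        * gjmsC n k (m-1) i * gjmsP i y
      = (m:ℝ)*((m:ℝ)-(k:ℝ))*((m:ℝ)-1+n/2)*((m:ℝ)-1+n/2-(k:ℝ)) * gjmsQ n k (m-1) y := by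
    rw [← gjmsQ_eq_sum n k (m-1) (m+2) (by omega) y, Finset.mul_sum]
    refine Finset.sum_congr rfl ?_
    intro i _
    ring
  rw [e1, e2, e3]
  congr 1
  rw [gjmsQ, Finset.mul_sum, ← Finset.sum_add_distrib]
  refine Finset.sum_congr rfl ?_
  intro i _
  rw [gjmsP_succ]
  ring

lemma gjmsC_top_zero (n : ℝ) (k : ℕ) (hk : 1 ≤ k) {i : ℕ} (hi : i < k) :
    gjmsC n k k i = 0 := by
  rw [gjmsC, if_pos (by omega)]
  rw [Finset.prod_eq_zero (Finset.mem_Ico.mpr ⟨by omega, by omega⟩ : k-1 ∈ Finset.Ico i k)]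
  · simp
  · rw [gjmsG]
    have : ((k-1 : ℕ) : ℝ) = (k:ℝ) - 1 := by
      push_cast [Nat.cast_sub hk]; ring
    rw [this]; ring

end GJMSAux


/-- Fix `n ∈ ℝ` and a positive integer `k`.  If `q_m` satisfies
`q_{−1} = 0`, `q_0 = 1` and the recursion
`q_{m+1} = [y − 2m(k−m−n/2) − n(k−1)/2] q_m − m(m−k)(m−1+n/2)(m−1+n/2−k) q_{m−1}`,
then `q_k(y) = ∏_{j=1}^k (y − j(j−1))`.  (The `q_{−1}` term is multiplied by the
coefficient `m`, which vanishes when `m = 0`, so it never contributes.) -/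
theorem gjms_recursion_product_formula
    (n : ℝ) (k : ℕ) (hk : 1 ≤ k)
    (q : ℕ → ℝ → ℝ)
    (hq0 : ∀ y, q 0 y = 1)
    (hrec : ∀ m : ℕ, m < k → ∀ y : ℝ,
      q (m + 1) y
        = (y - 2 * (m : ℝ) * ((k : ℝ) - (m : ℝ) - n/2) - n * ((k : ℝ) - 1)/2) * q m y
          - (m : ℝ) * ((m : ℝ) - (k : ℝ)) * ((m : ℝ) - 1 + n/2)
              * ((m : ℝ) - 1 + n/2 - (k : ℝ)) * q (m - 1) y) :
    ∀ y : ℝ, q k y = ∏ j ∈ Finset.Icc 1 k, (y - (j : ℝ) * ((j : ℝ) - 1)) := by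
  have key : ∀ m, m ≤ k → ∀ y, q m y = gjmsQ n k m y := by
    intro m
    induction m using Nat.strong_induction_on with
    | _ m ih =>
      intro hm y
      match m, hm with
      | 0, hm =>
        rw [hq0 y, gjmsQ]
        simp [gjmsC_self, gjmsP]
      | m+1, hm =>
        rw [hrec m (by omega) y, gjmsQ_rec, ih m (by omega) (by omega) y]
        congr 1
        rcases Nat.eq_zero_or_pos m with rfl | hmpos
        · norm_num
        · rw [ih (m-1) (by omega) (by omega) y]
  intro y
  rw [key k le_rfl y, gjmsQ, Finset.sum_range_succ, gjmsC_self, one_mul]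
  rw [Finset.sum_eq_zero, zero_add, gjmsP]
  intro i hi
  rw [gjmsC_top_zero n k hk (by simp at hi; omega), zero_mul]
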